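/- Let X, Θ, Y be separable real Hilbert spaces, U = X × Θ with norm ‖(x,θ)‖_U² = ‖x‖_X² + ‖θ‖_Θ², and F : U → Y Lipschitz with constant L. Let H be the class of all maps E : U → Y that are Lipschitz with constant at most R and satisfy ‖E(0)‖_Y ≤ B. Fix a deployment law ν_dep, a Borel probability measure on U with finite second moment, and define J(ν) = inf_{E∈H} R_ν(E) + c(ν,ν_dep) · W₂(ν,ν_dep). Then for every Borel probability measure ν on U with finite second moment, J(ν) ≥ J(ν_dep) = inf_{E∈H} R_{ν_dep}(E). -/

import Mathlib

open MeasureTheory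
open scoped ENNReal NNReal

noncomputable section

/-- The Hilbert norm on the product `U = X × Θ`: `‖(x, θ)‖_U = √(‖x‖² + ‖θ‖²)`. -/
def nU {X Θ : Type*} [NormedAddCommGroup X] [NormedAddCommGroup Θ] (u : X × Θ) : ℝ :=
  Real.sqrt (‖u.1‖ ^ 2 + ‖u.2‖ ^ 2)

/-- The 2-Wasserstein distance associated with a cost function `d`: the infimum over all
couplings `γ` of `μ` and `μ'` (i.e. probability measures on the product whose marginals are
`μ` and `μ'`) of `(∫ d(u,v)² dγ)^{1/2}`. -/
def W2 {α : Type*} [MeasurableSpace α] (d : α → α → ℝ) (μ μ' : Measure α) : ℝ :=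
  sInf { r : ℝ | ∃ γ : Measure (α × α), IsProbabilityMeasure γ ∧
      γ.map Prod.fst = μ ∧ γ.map Prod.snd = μ' ∧
      r = Real.sqrt (∫ p, d p.1 p.2 ^ 2 ∂γ) }

/-- The squared-error risk `R_ν(E) = ∫ ‖F(u) - E(u)‖² dν(u)`. -/
def risk {X Θ Y : Type*} [NormedAddCommGroup X] [NormedAddCommGroup Θ] [NormedAddCommGroup Y]
    [MeasurableSpace X] [MeasurableSpace Θ] (F E : X × Θ → Y) (ν : Measure (X × Θ)) : ℝ :=
  ∫ u, ‖F u - E u‖ ^ 2 ∂ν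

/-- The hypothesis class `H`: all maps `E : U → Y` that are Lipschitz with constant at most
`R₀` (with respect to the Hilbert product norm on `U`) and satisfy `‖E 0‖ ≤ B`. -/
def Hclass {X Θ Y : Type*} [NormedAddCommGroup X] [NormedAddCommGroup Θ] [NormedAddCommGroup Y]
    (R₀ B : ℝ) : Set (X × Θ → Y) :=
  { E | (∀ u v, ‖E u - E v‖ ≤ R₀ * nU (u - v)) ∧ ‖E 0‖ ≤ B }

/-- The constant `c(ν,ν') = C₁² √(2(∫‖u‖_U² dν + ∫‖u‖_U² dν')) + 2 C₁ C₂`, where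
`C₁ = L + R₀` and `C₂ = ‖F 0‖ + B`. -/
def cShift {X Θ Y : Type*} [NormedAddCommGroup X] [NormedAddCommGroup Θ] [NormedAddCommGroup Y]
    [MeasurableSpace X] [MeasurableSpace Θ] (L R₀ B : ℝ) (F : X × Θ → Y)
    (ν ν' : Measure (X × Θ)) : ℝ :=
  (L + R₀) ^ 2 * Real.sqrt (2 * ((∫ u, nU u ^ 2 ∂ν) + ∫ u, nU u ^ 2 ∂ν'))
    + 2 * (L + R₀) * (‖F 0‖ + B)

/-- The bound objective `J(ν) = inf_{E ∈ H} R_ν(E) + c(ν, ν_dep) W₂(ν, ν_dep)`, where the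
Wasserstein distance on `U = X × Θ` is taken with respect to the Hilbert product norm. -/
def Jobj {X Θ Y : Type*} [NormedAddCommGroup X] [NormedAddCommGroup Θ] [NormedAddCommGroup Y]
    [MeasurableSpace X] [MeasurableSpace Θ] (L R₀ B : ℝ) (F : X × Θ → Y)
    (νdep ν : Measure (X × Θ)) : ℝ :=
  sInf ((fun E => risk F E ν) '' Hclass R₀ B)
    + cShift L R₀ B F ν νdep * W2 (fun u v => nU (u - v)) ν νdep

section myhelpers

variable {X Θ : Type*} [NormedAddCommGroup X] [NormedAddCommGroup Θ]

lemma nU_nonneg (u : X × Θ) : 0 ≤ nU u := Real.sqrt_nonneg _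

lemma nU_sq (u : X × Θ) : nU u ^ 2 = ‖u.1‖ ^ 2 + ‖u.2‖ ^ 2 :=
  Real.sq_sqrt (by positivity)

lemma nU_neg (u : X × Θ) : nU (-u) = nU u := by simp [nU]

lemma nU_zero : nU (0 : X × Θ) = 0 := by simp [nU]

lemma nU_le_sqrt2 (u : X × Θ) : nU u ≤ Real.sqrt 2 * ‖u‖ := by
  have h1 : ‖u.1‖ ≤ ‖u‖ := norm_fst_le u
  have h2 : ‖u.2‖ ≤ ‖u‖ := norm_snd_le u
  have : nU u ≤ Real.sqrt (2 * ‖u‖ ^ 2) := by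
    apply Real.sqrt_le_sqrt
    nlinarith [norm_nonneg u.1, norm_nonneg u.2, norm_nonneg u]
  calc nU u ≤ Real.sqrt (2 * ‖u‖ ^ 2) := this
    _ = Real.sqrt 2 * ‖u‖ := by
        rw [Real.sqrt_mul (by norm_num), Real.sqrt_sq (norm_nonneg u)]

lemma continuous_nU : Continuous (nU : X × Θ → ℝ) :=
  Real.continuous_sqrt.comp
    (((continuous_norm.comp continuous_fst).pow 2).add
      ((continuous_norm.comp continuous_snd).pow 2))

lemma cont_of_lip {Y : Type*} [NormedAddCommGroup Y] {K : ℝ} (hK : 0 ≤ K)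
    {G : X × Θ → Y} (h : ∀ u v, ‖G u - G v‖ ≤ K * nU (u - v)) : Continuous G := by
  refine (LipschitzWith.of_dist_le_mul
    (K := ⟨K * Real.sqrt 2, by positivity⟩) ?_).continuous
  intro u v
  rw [dist_eq_norm, dist_eq_norm]
  calc ‖G u - G v‖ ≤ K * nU (u - v) := h u v
    _ ≤ K * (Real.sqrt 2 * ‖u - v‖) :=
        mul_le_mul_of_nonneg_left (nU_le_sqrt2 _) hK
    _ = (K * Real.sqrt 2) * ‖u - v‖ := by ring

end myhelpers

/-- Cauchy–Schwarz for integrals of nonnegative real functions. -/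
lemma integral_CS {α : Type*} [MeasurableSpace α] (μ : Measure α) {f g : α → ℝ}
    (hf0 : ∀ x, 0 ≤ f x) (hg0 : ∀ x, 0 ≤ g x)
    (hf2 : Integrable (fun x => f x ^ 2) μ) (hg2 : Integrable (fun x => g x ^ 2) μ)
    (hfg : Integrable (fun x => f x * g x) μ) :
    ∫ x, f x * g x ∂μ ≤ Real.sqrt (∫ x, f x ^ 2 ∂μ) * Real.sqrt (∫ x, g x ^ 2 ∂μ) := by
  set A := ∫ x, f x ^ 2 ∂μ with hAdef
  set Bq := ∫ x, g x ^ 2 ∂μ with hBdef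
  set C := ∫ x, f x * g x ∂μ with hCdef
  have hA : 0 ≤ A := integral_nonneg fun x => sq_nonneg _
  have hB : 0 ≤ Bq := integral_nonneg fun x => sq_nonneg _
  have hC : 0 ≤ C := integral_nonneg fun x => mul_nonneg (hf0 x) (hg0 x)
  have hquad : ∀ t : ℝ, 0 ≤ Bq * (t * t) + (-2 * C) * t + A := by
    intro t
    have heq : (fun x => (t * g x - f x) ^ 2)
        = fun x => (t ^ 2 * g x ^ 2 - 2 * t * (f x * g x)) + f x ^ 2 := by
      funext x; ring
    have hint1 : Integrable (fun x => t ^ 2 * g x ^ 2 - 2 * t * (f x * g x)) μ :=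
      (hg2.const_mul _).sub (hfg.const_mul _)
    have h0 : 0 ≤ ∫ x, (t * g x - f x) ^ 2 ∂μ := integral_nonneg fun x => sq_nonneg _
    have hval : ∫ x, (t * g x - f x) ^ 2 ∂μ = Bq * (t * t) + (-2 * C) * t + A := by
      rw [heq, integral_add hint1 hf2, integral_sub (hg2.const_mul _) (hfg.const_mul _),
        integral_const_mul, integral_const_mul, ← hAdef, ← hBdef, ← hCdef]
      ring
    linarith [hval ▸ h0]
  have hd := discrim_le_zero hquad
  rw [discrim] at hd
  have hC2 : C ^ 2 ≤ A * Bq := by nlinarith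
  calc C = Real.sqrt (C ^ 2) := (Real.sqrt_sq hC).symm
    _ ≤ Real.sqrt (A * Bq) := Real.sqrt_le_sqrt hC2
    _ = Real.sqrt A * Real.sqrt Bq := Real.sqrt_mul hA _

variable {X Θ Y : Type*}
  [NormedAddCommGroup X] [InnerProductSpace ℝ X] [CompleteSpace X]
  [SecondCountableTopology X] [MeasurableSpace X] [BorelSpace X]
  [NormedAddCommGroup Θ] [InnerProductSpace ℝ Θ] [CompleteSpace Θ]
  [SecondCountableTopology Θ] [MeasurableSpace Θ] [BorelSpace Θ]
  [NormedAddCommGroup Y] [InnerProductSpace ℝ Y] [CompleteSpace Y]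
  [SecondCountableTopology Y]

set_option maxHeartbeats 1000000 in
/-- One-coupling risk-shift bound. -/
lemma risk_shift (F : X × Θ → Y) (L R B : ℝ)
    (hL : 0 ≤ L) (hR : 0 ≤ R) (hB : 0 ≤ B)
    (hF : ∀ u v : X × Θ, ‖F u - F v‖ ≤ L * nU (u - v))
    {E : X × Θ → Y} (hE : E ∈ (Hclass R B : Set (X × Θ → Y)))
    (ν ν' : Measure (X × Θ)) [IsProbabilityMeasure ν] [IsProbabilityMeasure ν']
    (hν : Integrable (fun u => nU u ^ 2) ν) (hν' : Integrable (fun u => nU u ^ 2) ν')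
    (γ : Measure ((X × Θ) × (X × Θ))) (hγ : IsProbabilityMeasure γ)
    (hfst : γ.map Prod.fst = ν) (hsnd : γ.map Prod.snd = ν') :
    risk F E ν' ≤ risk F E ν
      + cShift L R B F ν ν' * Real.sqrt (∫ p, nU (p.1 - p.2) ^ 2 ∂γ) := by
  obtain ⟨hElip, hE0⟩ := hE
  set C1 : ℝ := L + R with hC1def
  set C2 : ℝ := ‖F 0‖ + B with hC2def
  have hC1 : 0 ≤ C1 := add_nonneg hL hR
  have hC2 : 0 ≤ C2 := add_nonneg (norm_nonneg _) hB
  have hFc : Continuous F := cont_of_lip hL hF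
  have hEc : Continuous E := cont_of_lip hR hElip
  set g : X × Θ → ℝ := fun u => ‖F u - E u‖ ^ 2 with hgdef
  have hgc : Continuous g := ((hFc.sub hEc).norm.pow 2)
  have hnsqc : Continuous (fun u : X × Θ => nU u ^ 2) := continuous_nU.pow 2
  -- pointwise bound on ‖F u - E u‖
  have hbound : ∀ u : X × Θ, ‖F u - E u‖ ≤ C2 + C1 * nU u := by
    intro u
    have h1 : ‖F u - F 0‖ ≤ L * nU u := by simpa using hF u 0
    have h2 : ‖E u - E 0‖ ≤ R * nU u := by simpa using hElip u 0
    have key : F u - E u = ((F u - F 0) - (E u - E 0)) + (F 0 - E 0) := by abel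
    have h3 := norm_add_le ((F u - F 0) - (E u - E 0)) (F 0 - E 0)
    have h4 := norm_sub_le (F u - F 0) (E u - E 0)
    have h5 := norm_sub_le (F 0) (E 0)
    rw [key]
    simp only [hC1def, hC2def]
    linarith
  -- integrability of g with respect to any second-moment probability law
  have hgint : ∀ (μ : Measure (X × Θ)), IsProbabilityMeasure μ →
      Integrable (fun u => nU u ^ 2) μ → Integrable g μ := by
    intro μ hpm hμ2
    refine Integrable.mono ((hμ2.const_mul (2 * C1 ^ 2)).add
      (integrable_const (2 * C2 ^ 2))) hgc.aestronglyMeasurable ?_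
    filter_upwards with u
    simp only [Pi.add_apply]
    have hb := hbound u
    have h0 : (0:ℝ) ≤ ‖F u - E u‖ := norm_nonneg _
    have hn := nU_nonneg u
    rw [Real.norm_eq_abs, abs_of_nonneg (sq_nonneg _), Real.norm_eq_abs,
      abs_of_nonneg (by positivity)]
    simp only [hgdef]
    nlinarith [sq_nonneg (C2 - C1 * nU u), mul_nonneg hC2 (mul_nonneg hC1 hn)]
  have hgν : Integrable g ν := hgint ν inferInstance hν
  have hgν' : Integrable g ν' := hgint ν' inferInstance hν'
  -- transfers along the coupling
  have hn1sq : Integrable (fun p : (X × Θ) × (X × Θ) => nU p.1 ^ 2) γ := by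
    have h := (integrable_map_measure hnsqc.aestronglyMeasurable
      measurable_fst.aemeasurable (μ := γ)).mp (by rw [hfst]; exact hν)
    exact h
  have hn2sq : Integrable (fun p : (X × Θ) × (X × Θ) => nU p.2 ^ 2) γ := by
    have h := (integrable_map_measure hnsqc.aestronglyMeasurable
      measurable_snd.aemeasurable (μ := γ)).mp (by rw [hsnd]; exact hν')
    exact h
  have hg1 : Integrable (fun p : (X × Θ) × (X × Θ) => g p.1) γ := by
    have h := (integrable_map_measure hgc.aestronglyMeasurable
      measurable_fst.aemeasurable (μ := γ)).mp (by rw [hfst]; exact hgν)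
    exact h
  have hg2 : Integrable (fun p : (X × Θ) × (X × Θ) => g p.2) γ := by
    have h := (integrable_map_measure hgc.aestronglyMeasurable
      measurable_snd.aemeasurable (μ := γ)).mp (by rw [hsnd]; exact hgν')
    exact h
  set d : (X × Θ) × (X × Θ) → ℝ := fun p => nU (p.1 - p.2) with hddef
  have hdc : Continuous d := continuous_nU.comp (continuous_fst.sub continuous_snd)
  have hd0 : ∀ p, 0 ≤ d p := fun p => nU_nonneg _
  have hd_ptsq : ∀ p : (X × Θ) × (X × Θ), d p ^ 2 ≤ 2 * (nU p.1 ^ 2 + nU p.2 ^ 2) := by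
    intro p
    have e : d p ^ 2 = ‖p.1.1 - p.2.1‖ ^ 2 + ‖p.1.2 - p.2.2‖ ^ 2 := by
      simp only [hddef]; rw [nU_sq]; rfl
    have h1 := norm_sub_le p.1.1 p.2.1
    have h2 := norm_sub_le p.1.2 p.2.2
    rw [e, nU_sq, nU_sq]
    nlinarith [norm_nonneg p.1.1, norm_nonneg p.2.1, norm_nonneg p.1.2,
      norm_nonneg p.2.2, norm_nonneg (p.1.1 - p.2.1), norm_nonneg (p.1.2 - p.2.2),
      sq_nonneg (‖p.1.1‖ - ‖p.2.1‖), sq_nonneg (‖p.1.2‖ - ‖p.2.2‖)]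
  have hdsq : Integrable (fun p => d p ^ 2) γ := by
    refine Integrable.mono ((hn1sq.add hn2sq).const_mul 2)
      ((hdc.pow 2).aestronglyMeasurable) ?_
    filter_upwards with p
    simp only [Pi.add_apply]
    rw [Real.norm_eq_abs, abs_of_nonneg (sq_nonneg _), Real.norm_eq_abs,
      abs_of_nonneg (by positivity)]
    exact hd_ptsq p
  have hd_int : Integrable d γ := by
    refine Integrable.mono ((integrable_const (1:ℝ)).add hdsq)
      hdc.aestronglyMeasurable ?_
    filter_upwards with p
    simp only [Pi.add_apply]
    rw [Real.norm_eq_abs, abs_of_nonneg (hd0 p), Real.norm_eq_abs,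
      abs_of_nonneg (by positivity)]
    nlinarith [sq_nonneg (d p - 1)]
  have hs2 : Integrable (fun p => (nU p.1 + nU p.2) ^ 2) γ := by
    refine Integrable.mono ((hn1sq.add hn2sq).const_mul 2)
      (((continuous_nU.comp continuous_fst).add
        (continuous_nU.comp continuous_snd)).pow 2).aestronglyMeasurable ?_
    filter_upwards with p
    simp only [Pi.add_apply]
    rw [Real.norm_eq_abs, abs_of_nonneg (sq_nonneg _), Real.norm_eq_abs,
      abs_of_nonneg (by positivity)]
    nlinarith [sq_nonneg (nU p.1 - nU p.2)]
  have hsd : Integrable (fun p => (nU p.1 + nU p.2) * d p) γ := by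
    refine Integrable.mono ((hn1sq.add hn2sq).add hdsq)
      (((continuous_nU.comp continuous_fst).add
        (continuous_nU.comp continuous_snd)).mul hdc).aestronglyMeasurable ?_
    filter_upwards with p
    have hn1 := nU_nonneg p.1
    have hn2 := nU_nonneg p.2
    simp only [Pi.add_apply]
    rw [Real.norm_eq_abs, abs_of_nonneg (mul_nonneg (by positivity) (hd0 p)),
      Real.norm_eq_abs, abs_of_nonneg (by positivity)]
    nlinarith [sq_nonneg (nU p.1 + nU p.2 - d p), sq_nonneg (nU p.1 - nU p.2),
      sq_nonneg (d p)]
  -- express risks through the coupling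
  have eq1 : risk F E ν = ∫ p, g p.1 ∂γ := by
    rw [risk, ← hfst,
      integral_map measurable_fst.aemeasurable hgc.aestronglyMeasurable]
  have eq2 : risk F E ν' = ∫ p, g p.2 ∂γ := by
    rw [risk, ← hsnd,
      integral_map measurable_snd.aemeasurable hgc.aestronglyMeasurable]
  -- the pointwise Lipschitz bound on the loss difference
  have hpt : ∀ p : (X × Θ) × (X × Θ),
      g p.2 - g p.1 ≤ (2 * C2 + C1 * (nU p.1 + nU p.2)) * (C1 * d p) := by
    intro p
    have hlip : ‖(F p.2 - E p.2) - (F p.1 - E p.1)‖ ≤ C1 * d p := by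
      have h1 := hF p.2 p.1
      have h2 := hElip p.2 p.1
      have e : nU (p.2 - p.1) = d p := by
        simp only [hddef]
        rw [← neg_sub p.1 p.2, nU_neg]
      calc ‖(F p.2 - E p.2) - (F p.1 - E p.1)‖
          = ‖(F p.2 - F p.1) - (E p.2 - E p.1)‖ := by congr 1; abel
        _ ≤ ‖F p.2 - F p.1‖ + ‖E p.2 - E p.1‖ := norm_sub_le _ _
        _ ≤ L * nU (p.2 - p.1) + R * nU (p.2 - p.1) := add_le_add h1 h2
        _ = C1 * d p := by rw [e]; simp only [hC1def]; ring
    have habs : |‖F p.2 - E p.2‖ - ‖F p.1 - E p.1‖| ≤ C1 * d p :=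
      (abs_norm_sub_norm_le _ _).trans hlip
    have hdiff := le_of_abs_le habs
    have hb1 := hbound p.1
    have hb2 := hbound p.2
    have h01 : (0:ℝ) ≤ ‖F p.1 - E p.1‖ := norm_nonneg _
    have h02 : (0:ℝ) ≤ ‖F p.2 - E p.2‖ := norm_nonneg _
    have hcd : 0 ≤ C1 * d p := mul_nonneg hC1 (hd0 p)
    simp only [hgdef]
    nlinarith [mul_nonneg (sub_nonneg.mpr hdiff) (add_nonneg h01 h02),
      mul_nonneg hcd (add_nonneg (nU_nonneg p.1) (nU_nonneg p.2)),
      mul_nonneg hC1 (add_nonneg (nU_nonneg p.1) (nU_nonneg p.2))]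
  -- integrable upper bound
  have hbint : Integrable
      (fun p => (2 * C2 + C1 * (nU p.1 + nU p.2)) * (C1 * d p)) γ := by
    have e : (fun p : (X × Θ) × (X × Θ) =>
        (2 * C2 + C1 * (nU p.1 + nU p.2)) * (C1 * d p))
        = fun p => (2 * C1 * C2) * d p + C1 ^ 2 * ((nU p.1 + nU p.2) * d p) := by
      funext p; ring
    rw [e]
    exact (hd_int.const_mul _).add (hsd.const_mul _)
  have hdiffint : risk F E ν' - risk F E ν
      ≤ ∫ p, (2 * C2 + C1 * (nU p.1 + nU p.2)) * (C1 * d p) ∂γ := by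
    rw [eq1, eq2, ← integral_sub hg2 hg1]
    exact integral_mono (hg2.sub hg1) hbint (fun p => hpt p)
  have hsplit : ∫ p, (2 * C2 + C1 * (nU p.1 + nU p.2)) * (C1 * d p) ∂γ
      = (2 * C1 * C2) * ∫ p, d p ∂γ
        + C1 ^ 2 * ∫ p, (nU p.1 + nU p.2) * d p ∂γ := by
    have e : (fun p : (X × Θ) × (X × Θ) =>
        (2 * C2 + C1 * (nU p.1 + nU p.2)) * (C1 * d p))
        = fun p => (2 * C1 * C2) * d p + C1 ^ 2 * ((nU p.1 + nU p.2) * d p) := by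
      funext p; ring
    rw [e, integral_add (hd_int.const_mul _) (hsd.const_mul _),
      integral_const_mul, integral_const_mul]
  set r : ℝ := Real.sqrt (∫ p, d p ^ 2 ∂γ) with hrdef
  have hr0 : 0 ≤ r := Real.sqrt_nonneg _
  -- Cauchy–Schwarz applications
  have hCS1 : ∫ p, d p ∂γ ≤ r := by
    have h := integral_CS γ (f := d) (g := fun _ => (1:ℝ)) hd0 (fun _ => zero_le_one)
      hdsq (by simpa using (integrable_const (1:ℝ))) (by simpa using hd_int)
    simpa [measure_univ] using h
  have hCS2 : ∫ p, (nU p.1 + nU p.2) * d p ∂γ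
      ≤ Real.sqrt (∫ p, (nU p.1 + nU p.2) ^ 2 ∂γ) * r := by
    exact integral_CS γ (f := fun p => nU p.1 + nU p.2) (g := d)
      (fun p => add_nonneg (nU_nonneg p.1) (nU_nonneg p.2)) hd0 hs2 hdsq hsd
  -- second moment bound
  have e1 : ∫ p, nU p.1 ^ 2 ∂γ = ∫ u, nU u ^ 2 ∂ν := by
    rw [← hfst, integral_map measurable_fst.aemeasurable hnsqc.aestronglyMeasurable]
  have e2 : ∫ p, nU p.2 ^ 2 ∂γ = ∫ u, nU u ^ 2 ∂ν' := by
    rw [← hsnd, integral_map measurable_snd.aemeasurable hnsqc.aestronglyMeasurable]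
  have hs2le : ∫ p, (nU p.1 + nU p.2) ^ 2 ∂γ
      ≤ 2 * ((∫ u, nU u ^ 2 ∂ν) + ∫ u, nU u ^ 2 ∂ν') := by
    have h := integral_mono hs2 ((hn1sq.add hn2sq).const_mul 2)
      (fun p => by simp only [Pi.add_apply]; nlinarith [sq_nonneg (nU p.1 - nU p.2)])
    rw [integral_const_mul] at h
    simp only [Pi.add_apply] at h
    rw [integral_add hn1sq hn2sq, e1, e2] at h
    linarith
  have hsqrtle : Real.sqrt (∫ p, (nU p.1 + nU p.2) ^ 2 ∂γ)
      ≤ Real.sqrt (2 * ((∫ u, nU u ^ 2 ∂ν) + ∫ u, nU u ^ 2 ∂ν')) :=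
    Real.sqrt_le_sqrt hs2le
  set M : ℝ := Real.sqrt (2 * ((∫ u, nU u ^ 2 ∂ν) + ∫ u, nU u ^ 2 ∂ν')) with hMdef
  have hM0 : 0 ≤ M := Real.sqrt_nonneg _
  have hfinal : risk F E ν' - risk F E ν ≤ (C1 ^ 2 * M + 2 * C1 * C2) * r := by
    have h1 : (2 * C1 * C2) * ∫ p, d p ∂γ ≤ (2 * C1 * C2) * r :=
      mul_le_mul_of_nonneg_left hCS1 (by positivity)
    have h2 : C1 ^ 2 * ∫ p, (nU p.1 + nU p.2) * d p ∂γ ≤ C1 ^ 2 * (M * r) := by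
      refine mul_le_mul_of_nonneg_left ?_ (sq_nonneg _)
      calc ∫ p, (nU p.1 + nU p.2) * d p ∂γ
          ≤ Real.sqrt (∫ p, (nU p.1 + nU p.2) ^ 2 ∂γ) * r := hCS2
        _ ≤ M * r := mul_le_mul_of_nonneg_right hsqrtle hr0
    calc risk F E ν' - risk F E ν
        ≤ ∫ p, (2 * C2 + C1 * (nU p.1 + nU p.2)) * (C1 * d p) ∂γ := hdiffint
      _ = (2 * C1 * C2) * ∫ p, d p ∂γ
            + C1 ^ 2 * ∫ p, (nU p.1 + nU p.2) * d p ∂γ := hsplit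
      _ ≤ (2 * C1 * C2) * r + C1 ^ 2 * (M * r) := add_le_add h1 h2
      _ = (C1 ^ 2 * M + 2 * C1 * C2) * r := by ring
  have : cShift L R B F ν ν' = C1 ^ 2 * M + 2 * C1 * C2 := by
    simp only [cShift, hC1def, hC2def, hMdef]
  rw [this]
  simp only [hrdef, hddef] at hfinal ⊢
  linarith

set_option maxHeartbeats 1000000

/-- The coupling-cost set underlying `W2`. -/
lemma W2_set_nonneg {α : Type*} [MeasurableSpace α] (d : α → α → ℝ) (μ μ' : Measure α) :
    ∀ r ∈ { r : ℝ | ∃ γ : Measure (α × α), IsProbabilityMeasure γ ∧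
      γ.map Prod.fst = μ ∧ γ.map Prod.snd = μ' ∧
      r = Real.sqrt (∫ p, d p.1 p.2 ^ 2 ∂γ) }, 0 ≤ r := by
  rintro r ⟨γ, _, _, _, rfl⟩
  exact Real.sqrt_nonneg _

lemma W2_nonneg_of_nonempty {α : Type*} [MeasurableSpace α] (d : α → α → ℝ)
    (μ μ' : Measure α)
    (hne : { r : ℝ | ∃ γ : Measure (α × α), IsProbabilityMeasure γ ∧
      γ.map Prod.fst = μ ∧ γ.map Prod.snd = μ' ∧
      r = Real.sqrt (∫ p, d p.1 p.2 ^ 2 ∂γ) }.Nonempty) :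
    0 ≤ W2 d μ μ' :=
  le_csInf hne (W2_set_nonneg d μ μ')

lemma W2_le_of_mem {α : Type*} [MeasurableSpace α] (d : α → α → ℝ) (μ μ' : Measure α)
    {r : ℝ} (h : r ∈ { r : ℝ | ∃ γ : Measure (α × α), IsProbabilityMeasure γ ∧
      γ.map Prod.fst = μ ∧ γ.map Prod.snd = μ' ∧
      r = Real.sqrt (∫ p, d p.1 p.2 ^ 2 ∂γ) }) :
    W2 d μ μ' ≤ r :=
  csInf_le ⟨0, W2_set_nonneg d μ μ'⟩ h

lemma W2_self_eq_zero (μ : Measure (X × Θ)) [IsProbabilityMeasure μ] :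
    W2 (fun u v => nU (u - v)) μ μ = 0 := by
  have hdiag : Measurable (fun u : X × Θ => (u, u)) :=
    measurable_id.prodMk measurable_id
  set γ : Measure ((X × Θ) × (X × Θ)) := μ.map (fun u => (u, u)) with hγdef
  have hpm : IsProbabilityMeasure γ := Measure.isProbabilityMeasure_map hdiag.aemeasurable
  have hfst : γ.map Prod.fst = μ := by
    rw [hγdef, Measure.map_map measurable_fst hdiag]
    have e : (Prod.fst ∘ fun u : X × Θ => (u, u)) = id := rfl
    rw [e, Measure.map_id]
  have hsnd : γ.map Prod.snd = μ := by
    rw [hγdef, Measure.map_map measurable_snd hdiag]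
    have e : (Prod.snd ∘ fun u : X × Θ => (u, u)) = id := rfl
    rw [e, Measure.map_id]
  have hcont : Continuous (fun p : (X × Θ) × (X × Θ) => nU (p.1 - p.2) ^ 2) :=
    (continuous_nU.comp (continuous_fst.sub continuous_snd)).pow 2
  have hint : ∫ p : (X × Θ) × (X × Θ), nU (p.1 - p.2) ^ 2 ∂γ = 0 := by
    rw [hγdef, integral_map hdiag.aemeasurable hcont.aestronglyMeasurable]
    simp [sub_self, nU_zero]
  have hmem : (0 : ℝ) ∈ { r : ℝ | ∃ γ : Measure ((X × Θ) × (X × Θ)),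
      IsProbabilityMeasure γ ∧ γ.map Prod.fst = μ ∧ γ.map Prod.snd = μ ∧
      r = Real.sqrt (∫ p, (fun u v => nU (u - v)) p.1 p.2 ^ 2 ∂γ) } :=
    ⟨γ, hpm, hfst, hsnd, by simp only []; rw [hint, Real.sqrt_zero]⟩
  have h1 : W2 (fun u v => nU (u - v)) μ μ ≤ 0 :=
    W2_le_of_mem _ μ μ hmem
  have h2 : 0 ≤ W2 (fun u v => nU (u - v)) μ μ :=
    W2_nonneg_of_nonempty _ μ μ ⟨0, hmem⟩
  linarith


lemma W2_exists_lt {α : Type*} [MeasurableSpace α] (d : α → α → ℝ) (μ μ' : Measure α)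
    (hne : { r : ℝ | ∃ γ : Measure (α × α), IsProbabilityMeasure γ ∧
      γ.map Prod.fst = μ ∧ γ.map Prod.snd = μ' ∧
      r = Real.sqrt (∫ p, d p.1 p.2 ^ 2 ∂γ) }.Nonempty) {ε : ℝ} (hε : 0 < ε) :
    ∃ r ∈ { r : ℝ | ∃ γ : Measure (α × α), IsProbabilityMeasure γ ∧
      γ.map Prod.fst = μ ∧ γ.map Prod.snd = μ' ∧
      r = Real.sqrt (∫ p, d p.1 p.2 ^ 2 ∂γ) }, r < W2 d μ μ' + ε :=
  Real.lt_sInf_add_pos hne hε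

/-- Risk stability with respect to the Wasserstein distance. -/
lemma risk_W2 (F : X × Θ → Y) (L R B : ℝ)
    (hL : 0 ≤ L) (hR : 0 ≤ R) (hB : 0 ≤ B)
    (hF : ∀ u v : X × Θ, ‖F u - F v‖ ≤ L * nU (u - v))
    {E : X × Θ → Y} (hE : E ∈ (Hclass R B : Set (X × Θ → Y)))
    (ν ν' : Measure (X × Θ)) [IsProbabilityMeasure ν] [IsProbabilityMeasure ν']
    (hν : Integrable (fun u => nU u ^ 2) ν) (hν' : Integrable (fun u => nU u ^ 2) ν') :
    risk F E ν' ≤ risk F E ν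
      + cShift L R B F ν ν' * W2 (fun u v => nU (u - v)) ν ν' := by
  have hprod : IsProbabilityMeasure (ν.prod ν') := inferInstance
  have hf : (ν.prod ν').map Prod.fst = ν := by
    rw [Measure.map_fst_prod, measure_univ, one_smul]
  have hs : (ν.prod ν').map Prod.snd = ν' := by
    rw [Measure.map_snd_prod, measure_univ, one_smul]
  have hSne : { r : ℝ | ∃ γ : Measure ((X × Θ) × (X × Θ)), IsProbabilityMeasure γ ∧
      γ.map Prod.fst = ν ∧ γ.map Prod.snd = ν' ∧
      r = Real.sqrt (∫ p, (fun u v => nU (u - v)) p.1 p.2 ^ 2 ∂γ) }.Nonempty :=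
    ⟨_, ⟨ν.prod ν', hprod, hf, hs, rfl⟩⟩
  have hc0 : 0 ≤ cShift L R B F ν ν' := by
    rw [cShift]
    have h0 := Real.sqrt_nonneg (2 * ((∫ u, nU u ^ 2 ∂ν) + ∫ u, nU u ^ 2 ∂ν'))
    have h1 : (0:ℝ) ≤ (L + R) ^ 2 := sq_nonneg _
    have h2 : (0:ℝ) ≤ ‖F 0‖ + B := add_nonneg (norm_nonneg _) hB
    nlinarith [add_nonneg hL hR]
  set c := cShift L R B F ν ν' with hcdef
  set W := W2 (fun u v => nU (u - v)) ν ν' with hWdef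
  refine le_of_forall_sub_le ?_
  intro δ hδ
  have hε : 0 < δ / (c + 1) := by positivity
  obtain ⟨r, hrS, hrlt⟩ := W2_exists_lt (fun u v => nU (u - v)) ν ν' hSne hε
  obtain ⟨γ, hγpm, hγfst, hγsnd, hrval⟩ := hrS
  have hkey := risk_shift F L R B hL hR hB hF hE ν ν' hν hν' γ hγpm hγfst hγsnd
  have hstep : risk F E ν' ≤ risk F E ν + c * r := by
    rw [hcdef]
    calc risk F E ν' ≤ risk F E ν
        + cShift L R B F ν ν' * Real.sqrt (∫ p, nU (p.1 - p.2) ^ 2 ∂γ) := hkey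
      _ = risk F E ν + cShift L R B F ν ν' * r := by
          rw [hrval]
  have hcr : c * r ≤ c * (W + δ / (c + 1)) :=
    mul_le_mul_of_nonneg_left (le_of_lt hrlt) hc0
  have hclast : c * (δ / (c + 1)) ≤ δ := by
    rw [div_eq_inv_mul]
    have h1 : c / (c + 1) ≤ 1 := by
      rw [div_le_one (by linarith)]; linarith
    calc c * ((c + 1)⁻¹ * δ) = (c / (c + 1)) * δ := by ring
      _ ≤ 1 * δ := mul_le_mul_of_nonneg_right h1 (le_of_lt hδ)
      _ = δ := one_mul δ
  have hexp : c * (W + δ / (c + 1)) = c * W + c * (δ / (c + 1)) := by ring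
  linarith

/-- **Proposition, bound-optimality at the deployment law.**
For every Borel probability measure `ν` with finite second moment,
`J(ν) ≥ J(ν_dep) = inf_{E ∈ H} R_{ν_dep}(E)`. -/
theorem bound_optimality (F : X × Θ → Y) (L R B : ℝ)
    (hL : 0 ≤ L) (hR : 0 ≤ R) (hB : 0 ≤ B)
    (hF : ∀ u v : X × Θ, ‖F u - F v‖ ≤ L * nU (u - v))
    (νdep : Measure (X × Θ)) [IsProbabilityMeasure νdep]
    (hdep : Integrable (fun u => nU u ^ 2) νdep) :
    ∀ ν : Measure (X × Θ), IsProbabilityMeasure ν → Integrable (fun u => nU u ^ 2) ν →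
      Jobj L R B F νdep ν ≥ Jobj L R B F νdep νdep ∧
        Jobj L R B F νdep νdep = sInf ((fun E => risk F E νdep) '' (Hclass R B : Set (X × Θ → Y))) := by
  intro ν hνprob hν
  haveI := hνprob
  have h0mem : (fun _ : X × Θ => (0 : Y)) ∈ (Hclass R B : Set (X × Θ → Y)) := by
    constructor
    · intro u v
      simp only [sub_self, norm_zero]
      exact mul_nonneg hR (nU_nonneg _)
    · simpa using hB
  have hrisk_nonneg : ∀ (E : X × Θ → Y) (μ : Measure (X × Θ)), 0 ≤ risk F E μ :=
    fun E μ => integral_nonneg fun u => sq_nonneg _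
  have hbdddep : BddBelow ((fun E => risk F E νdep) '' (Hclass R B : Set (X × Θ → Y))) := by
    refine ⟨0, ?_⟩
    rintro x ⟨E, hEH, rfl⟩
    exact hrisk_nonneg E νdep
  have hneν : ((fun E => risk F E ν) '' (Hclass R B : Set (X × Θ → Y))).Nonempty :=
    ⟨_, ⟨_, h0mem, rfl⟩⟩
  have hJdep : Jobj L R B F νdep νdep
      = sInf ((fun E => risk F E νdep) '' (Hclass R B : Set (X × Θ → Y))) := by
    rw [Jobj, W2_self_eq_zero, mul_zero, add_zero]
  refine ⟨?_, hJdep⟩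
  rw [ge_iff_le, hJdep, Jobj]
  have hlb : sInf ((fun E => risk F E νdep) '' (Hclass R B : Set (X × Θ → Y)))
      - cShift L R B F ν νdep * W2 (fun u v => nU (u - v)) ν νdep
      ≤ sInf ((fun E => risk F E ν) '' (Hclass R B : Set (X × Θ → Y))) := by
    refine le_csInf hneν ?_
    rintro b ⟨E, hEH, rfl⟩
    have h1 : sInf ((fun E => risk F E νdep) '' (Hclass R B : Set (X × Θ → Y)))
        ≤ risk F E νdep := csInf_le hbdddep ⟨E, hEH, rfl⟩
    have h2 := risk_W2 F L R B hL hR hB hF hEH ν νdep hν hdep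
    linarith
  linarith
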